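/- Let (A_n) be an Appell sequence with α_n = A_n(0) satisfying the reflection relation A_n(1-x) = (-1)^n·A_n(x). Then for every odd n ≥ 1 and every k with (n+1)/2 ≤ k ≤ n, the identity Σ_{ν=0}^k C(2k-ν, k)·C(n,ν)·α_{n-ν} = 0 holds. -/

import Mathlib

open Polynomial in
lemma poly_coeff_one_sub_pow (μ ν : ℕ) :
    ((1 - X : ℂ[X]) ^ μ).coeff ν = (-1) ^ ν * (μ.choose ν : ℂ) := by
  have h : (1 - X : ℂ[X]) ^ μ = ∑ j ∈ Finset.range (μ + 1),
      C ((-1) ^ j * (μ.choose j : ℂ)) * X ^ j := by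
    have := add_pow (-X : ℂ[X]) 1 μ
    rw [show (-X + 1 : ℂ[X]) = 1 - X by ring] at this
    rw [this]
    refine Finset.sum_congr rfl fun j hj => ?_
    rw [neg_pow, one_pow, map_mul, map_pow, map_neg, map_one, C_eq_natCast]
    ring
  rw [h, finset_sum_coeff]
  simp only [coeff_C_mul, coeff_X_pow]
  by_cases hν : ν ≤ μ
  · rw [Finset.sum_eq_single ν]
    · simp
    · intro j _ hjν; simp [Ne.symm hjν]
    · intro hc; exact absurd (Finset.mem_range.2 (by omega)) hc
  · rw [Finset.sum_eq_zero, Nat.choose_eq_zero_of_lt (by omega)]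
    · simp
    · intro j hj
      rw [Finset.mem_range] at hj
      simp [show ¬ ν = j by omega]

lemma ps_coeff_one_sub_pow (μ ν : ℕ) :
    (PowerSeries.coeff ν) ((1 - PowerSeries.X) ^ μ) = (-1) ^ ν * (μ.choose ν : ℂ) := by
  have h : (((1 - Polynomial.X) ^ μ : Polynomial ℂ) : PowerSeries ℂ)
      = (1 - PowerSeries.X) ^ μ := by
    rw [Polynomial.coe_pow, Polynomial.coe_sub, Polynomial.coe_one, Polynomial.coe_X]
  rw [← h, Polynomial.coeff_coe, poly_coeff_one_sub_pow]

lemma key_binom (k μ : ℕ) (hμ : μ ≤ 2 * k) :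
    ∑ ν ∈ Finset.range (k + 1),
      (-1 : ℂ) ^ ν * ((2 * k - ν).choose k : ℂ) * (μ.choose ν : ℂ)
      = ((2 * k - μ).choose k : ℂ) := by
  have hval := PowerSeries.invOneSubPow_val_succ_eq_mk_add_choose ℂ k
  -- compute coeff k of (1-X)^μ * invOneSubPow(k+1) in two ways
  have way1 : (PowerSeries.coeff k) ((1 - PowerSeries.X) ^ μ *
      (PowerSeries.invOneSubPow ℂ (k + 1)).val)
      = ∑ ν ∈ Finset.range (k + 1),
        (-1 : ℂ) ^ ν * ((2 * k - ν).choose k : ℂ) * (μ.choose ν : ℂ) := by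
    rw [PowerSeries.coeff_mul, Finset.Nat.sum_antidiagonal_eq_sum_range_succ_mk]
    refine Finset.sum_congr rfl fun ν hν => ?_
    rw [Finset.mem_range] at hν
    rw [ps_coeff_one_sub_pow, hval, PowerSeries.coeff_mk,
      show k + (k - ν) = 2 * k - ν by omega]
    ring
  rw [← way1]
  have hone : (1 - PowerSeries.X : PowerSeries ℂ) ^ (k + 1) *
      (PowerSeries.invOneSubPow ℂ (k + 1)).val = 1 := by
    rw [← PowerSeries.invOneSubPow_inv_eq_one_sub_pow]
    exact (PowerSeries.invOneSubPow ℂ (k + 1)).inv_val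
  by_cases hc : μ ≤ k
  · have hunit : IsUnit ((1 - PowerSeries.X : PowerSeries ℂ) ^ (k + 1)) :=
      IsUnit.of_mul_eq_one _ hone
    have heq : (1 - PowerSeries.X) ^ μ * (PowerSeries.invOneSubPow ℂ (k + 1)).val
        = (PowerSeries.invOneSubPow ℂ (k + 1 - μ)).val := by
      refine hunit.mul_left_cancel ?_
      have hone2 : (1 - PowerSeries.X : PowerSeries ℂ) ^ (k + 1 - μ) *
          (PowerSeries.invOneSubPow ℂ (k + 1 - μ)).val = 1 := by
        rw [← PowerSeries.invOneSubPow_inv_eq_one_sub_pow]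
        exact (PowerSeries.invOneSubPow ℂ (k + 1 - μ)).inv_val
      calc (1 - PowerSeries.X : PowerSeries ℂ) ^ (k + 1) *
            ((1 - PowerSeries.X) ^ μ * (PowerSeries.invOneSubPow ℂ (k + 1)).val)
          = (1 - PowerSeries.X) ^ μ * ((1 - PowerSeries.X) ^ (k + 1) *
            (PowerSeries.invOneSubPow ℂ (k + 1)).val) := by ring
        _ = (1 - PowerSeries.X) ^ μ := by rw [hone, mul_one]
        _ = (1 - PowerSeries.X) ^ μ * ((1 - PowerSeries.X) ^ (k + 1 - μ) *
            (PowerSeries.invOneSubPow ℂ (k + 1 - μ)).val) := by rw [hone2, mul_one]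
        _ = (1 - PowerSeries.X) ^ (k + 1) *
            (PowerSeries.invOneSubPow ℂ (k + 1 - μ)).val := by
            rw [← mul_assoc, ← pow_add, show μ + (k + 1 - μ) = k + 1 by omega]
    rw [heq, show k + 1 - μ = (k - μ) + 1 by omega,
      PowerSeries.invOneSubPow_val_succ_eq_mk_add_choose, PowerSeries.coeff_mk,
      show k - μ + k = 2 * k - μ by omega, show k - μ = 2 * k - μ - k by omega,
      Nat.choose_symm (by omega)]
  · have heq : (1 - PowerSeries.X) ^ μ * (PowerSeries.invOneSubPow ℂ (k + 1)).val
        = (1 - PowerSeries.X) ^ (μ - (k + 1)) := by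
      rw [show μ = (μ - (k + 1)) + (k + 1) by omega, pow_add, mul_assoc, hone, mul_one,
        show μ - (k+1) + (k+1) - (k+1) = μ - (k+1) by omega]
    rw [heq, ps_coeff_one_sub_pow, Nat.choose_eq_zero_of_lt (by omega),
      Nat.choose_eq_zero_of_lt (by omega)]
    simp

open Polynomial in
private lemma appell_vanishing_sum_aux (α : ℕ → ℂ) (A : ℕ → ℂ → ℂ)
    (hA : ∀ n x, A n x =
      ∑ ν ∈ Finset.range (n + 1), (n.choose ν : ℂ) * α (n - ν) * x ^ ν)
    (href : ∀ n x, A n (1 - x) = (-1) ^ n * A n x)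
    (n k : ℕ) (hn : Odd n) (hk1 : (n + 1) / 2 ≤ k) (hk2 : k ≤ n) :
    ∑ ν ∈ Finset.range (k + 1),
      ((2 * k - ν).choose k : ℂ) * (n.choose ν : ℂ) * α (n - ν) = 0 := by
  have h2k : n + 1 ≤ 2 * k := by
    have := hn
    rw [Nat.odd_iff] at this
    omega
  set c : ℕ → ℂ := fun ν => (n.choose ν : ℂ) * α (n - ν) with hc
  set p : ℂ[X] := ∑ ν ∈ Finset.range (n + 1), C (c ν) * X ^ ν with hp
  have heval : ∀ x, p.eval x = A n x := by
    intro x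
    rw [hA, hp, eval_finset_sum]
    simp [hc]
  have hcomp : p.comp (1 - X) = -p := by
    apply Polynomial.funext
    intro x
    rw [eval_comp, eval_neg]
    simp only [eval_sub, eval_one, eval_X]
    rw [heval, heval, href, hn.neg_one_pow, neg_one_mul]
  have hcoeffp : ∀ ν, ν ≤ n → p.coeff ν = c ν := by
    intro ν hν
    rw [hp, finset_sum_coeff]
    simp only [coeff_C_mul, coeff_X_pow]
    rw [Finset.sum_eq_single ν]
    · simp
    · intro j _ hjν; simp [Ne.symm hjν]
    · intro hcon; exact absurd (Finset.mem_range.2 (by omega)) hcon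
  have hcompexp : p.comp (1 - X) = ∑ μ ∈ Finset.range (n + 1), C (c μ) * (1 - X) ^ μ := by
    rw [hp, Polynomial.comp, Polynomial.eval₂_finset_sum]
    refine Finset.sum_congr rfl fun μ _ => ?_
    simp [Polynomial.eval₂_mul]
  have hrel : ∀ ν, ν ≤ n →
      c ν = -∑ μ ∈ Finset.range (n + 1), c μ * ((-1) ^ ν * (μ.choose ν : ℂ)) := by
    intro ν hν
    have h1 : (p.comp (1 - X)).coeff ν = (-p).coeff ν := by rw [hcomp]
    rw [hcompexp, finset_sum_coeff] at h1
    simp only [coeff_C_mul, coeff_neg] at h1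
    rw [hcoeffp ν hν] at h1
    have h2 : ∑ x ∈ Finset.range (n + 1), c x * ((1 - Polynomial.X : ℂ[X]) ^ x).coeff ν
        = ∑ μ ∈ Finset.range (n + 1), c μ * ((-1) ^ ν * (μ.choose ν : ℂ)) :=
      Finset.sum_congr rfl fun μ _ => by rw [poly_coeff_one_sub_pow]
    rw [← h2, h1, neg_neg]
  have hSc : ∑ ν ∈ Finset.range (k + 1), ((2 * k - ν).choose k : ℂ) * c ν
      = -∑ ν ∈ Finset.range (k + 1), ((2 * k - ν).choose k : ℂ) * c ν := by
    calc ∑ ν ∈ Finset.range (k + 1), ((2 * k - ν).choose k : ℂ) * c ν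
        = ∑ ν ∈ Finset.range (k + 1), ∑ μ ∈ Finset.range (n + 1),
          -((-1) ^ ν * ((2 * k - ν).choose k : ℂ) * (μ.choose ν : ℂ) * c μ) := by
          refine Finset.sum_congr rfl fun ν hν => ?_
          rw [Finset.mem_range] at hν
          rw [hrel ν (by omega), mul_neg, Finset.mul_sum, ← Finset.sum_neg_distrib]
          exact Finset.sum_congr rfl fun μ _ => by ring
      _ = ∑ μ ∈ Finset.range (n + 1),
          -((∑ ν ∈ Finset.range (k + 1),
            (-1) ^ ν * ((2 * k - ν).choose k : ℂ) * (μ.choose ν : ℂ)) * c μ) := by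
          rw [Finset.sum_comm]
          refine Finset.sum_congr rfl fun μ _ => ?_
          rw [Finset.sum_mul, ← Finset.sum_neg_distrib]
      _ = ∑ μ ∈ Finset.range (n + 1), -(((2 * k - μ).choose k : ℂ) * c μ) := by
          refine Finset.sum_congr rfl fun μ hμ => ?_
          rw [Finset.mem_range] at hμ
          rw [key_binom k μ (by omega)]
      _ = -∑ μ ∈ Finset.range (n + 1), ((2 * k - μ).choose k : ℂ) * c μ := by
          rw [Finset.sum_neg_distrib]
      _ = -∑ ν ∈ Finset.range (k + 1), ((2 * k - ν).choose k : ℂ) * c ν := by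
          congr 1
          symm
          refine Finset.sum_subset (Finset.range_subset_range.2 (by omega)) fun μ _ hμ => ?_
          rw [Finset.mem_range, not_lt] at hμ
          rw [Nat.choose_eq_zero_of_lt (by omega)]
          simp
  have hS0 : ∑ ν ∈ Finset.range (k + 1), ((2 * k - ν).choose k : ℂ) * c ν = 0 := by
    have h2 : (2 : ℂ) * ∑ ν ∈ Finset.range (k + 1), ((2 * k - ν).choose k : ℂ) * c ν = 0 := by
      linear_combination hSc
    exact (mul_eq_zero.mp h2).resolve_left two_ne_zero
  rw [← hS0]
  exact Finset.sum_congr rfl fun ν _ => by rw [hc]; ring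

/-- Vanishing sums for Appell coefficients under the reflection relation. -/
theorem appell_vanishing_sum (α : ℕ → ℂ) (A : ℕ → ℂ → ℂ)
    (hA : ∀ n x, A n x =
      ∑ ν ∈ Finset.range (n + 1), (n.choose ν : ℂ) * α (n - ν) * x ^ ν)
    (href : ∀ n x, A n (1 - x) = (-1) ^ n * A n x)
    (n k : ℕ) (hn : Odd n) (hk1 : (n + 1) / 2 ≤ k) (hk2 : k ≤ n) :
    ∑ ν ∈ Finset.range (k + 1),
      ((2 * k - ν).choose k : ℂ) * (n.choose ν : ℂ) * α (n - ν) = 0 :=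
  appell_vanishing_sum_aux α A hA href n k hn hk1 hk2
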